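/- The Taylor expansion commutes with linear substitution: for any expression A and term N of the resource λ-calculus with promotion, T(A⟨N/x⟩) = T(A)⟨T(N)/x⟩, where T(-) denotes the set of promotion-free approximants and substitution is extended elementwise to sets. -/
import Mathlib


/-- Terms of the resource λ-calculus with promotion (`∂λ`-calculus): in
`app M P Ns`, the bag `[P₁,…,P_k, ℕ^!]` consists of the linear resources `P`
and the promoted (finite, idempotent) sum `ℕ` represented by the list `Ns`. -/
inductive Tm : Type
  | var : ℕ → Tm
  | lam : ℕ → Tm → Tm
  | app : Tm → List Tm → List Tm → Tm

mutual
/-- Linear substitution `A⟨N/x⟩` (a set of terms, sums being idempotent); on a bag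
`[L₁,…,L_k, ℕ^!]` it produces the substitutions in each linear resource together with
the extra summand `[L₁,…,L_k, ℕ⟨N/x⟩, ℕ^!]`. -/
def lsub (x : ℕ) (N : Tm) : Tm → Set Tm
  | .var y => if y = x then {N} else ∅
  | .lam y M => if y = x then ∅ else {A | ∃ M' ∈ lsub x N M, A = Tm.lam y M'}
  | .app M P Q => {A | ∃ M' ∈ lsub x N M, A = Tm.app M' P Q} ∪
      {A | ∃ P' ∈ lsubList x N P, A = Tm.app M P' Q} ∪
      {A | ∃ N' ∈ lsubSum x N Q, A = Tm.app M (P ++ [N']) Q}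
/-- Linear substitution in exactly one element of a list of linear resources. -/
def lsubList (x : ℕ) (N : Tm) : List Tm → Set (List Tm)
  | [] => ∅
  | L :: P => {R | ∃ L' ∈ lsub x N L, R = L' :: P} ∪
      {R | ∃ P' ∈ lsubList x N P, R = L :: P'}
/-- Linear substitution in a sum of terms (union over the summands). -/
def lsubSum (x : ℕ) (N : Tm) : List Tm → Set Tm
  | [] => ∅
  | L :: Ls => lsub x N L ∪ lsubSum x N Ls
end

mutual
/-- The (support of the) Taylor expansion `T(A)`: the set of promotion-free approximants,
obtained by replacing each promoted component `ℕ^!` by an arbitrary finite multiset of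
elements of `T(ℕ)` (bags being multisets, they are closed under permutation). -/
def T : Tm → Set Tm
  | .var y => {.var y}
  | .lam y M => {A | ∃ M' ∈ T M, A = Tm.lam y M'}
  | .app M P Q => {A | ∃ M' ∈ T M, ∃ P' ∈ TList P, ∃ R : List Tm,
      (∀ L ∈ R, L ∈ TSum Q) ∧ ∃ P'' : List Tm, P''.Perm (P' ++ R) ∧ A = Tm.app M' P'' []}
/-- Taylor expansion of a list of linear resources, elementwise. -/
def TList : List Tm → Set (List Tm)
  | [] => {[]}
  | L :: P => {R | ∃ L' ∈ T L, ∃ P' ∈ TList P, R = L' :: P'}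
/-- Taylor expansion of a sum of terms. -/
def TSum : List Tm → Set Tm
  | [] => ∅
  | L :: Ls => T L ∪ TSum Ls
end

-- basic membership lemmas
lemma mem_TSum_iff {Q : List Tm} {A : Tm} : A ∈ TSum Q ↔ ∃ L ∈ Q, A ∈ T L := by
  induction Q with
  | nil => simp [TSum]
  | cons L Ls ih => simp [TSum, Set.mem_union, ih]

lemma mem_lsubSum_iff {x N} {Q : List Tm} {A : Tm} :
    A ∈ lsubSum x N Q ↔ ∃ L ∈ Q, A ∈ lsub x N L := by
  induction Q with
  | nil => simp [lsubSum]
  | cons L Ls ih => simp [lsubSum, Set.mem_union, ih]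

lemma mem_TList_iff : ∀ {P B : List Tm}, B ∈ TList P ↔ List.Forall₂ (fun a b => a ∈ T b) B P := by
  intro P
  induction P with
  | nil => intro B; simp [TList]
  | cons L P ih =>
    intro B
    simp [TList, Set.mem_setOf_eq, List.forall₂_cons_right_iff, ih]

lemma forall₂_append_right {α β} {R : α → β → Prop} :
    ∀ {u v : List β} {B : List α},
      List.Forall₂ R B (u ++ v) ↔ ∃ B₁ B₂, List.Forall₂ R B₁ u ∧ List.Forall₂ R B₂ v ∧ B = B₁ ++ B₂
  | [], v, B => by simp
  | b :: u, v, B => by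
    rw [List.cons_append, List.forall₂_cons_right_iff]
    constructor
    · rintro ⟨a, B', hab, hB', rfl⟩
      obtain ⟨B₁, B₂, h₁, h₂, rfl⟩ := forall₂_append_right.1 hB'
      exact ⟨a :: B₁, B₂, List.Forall₂.cons hab h₁, h₂, rfl⟩
    · rintro ⟨B₁, B₂, h₁, h₂, rfl⟩
      obtain ⟨a, B₁', hab, h₁', rfl⟩ := List.forall₂_cons_right_iff.1 h₁
      exact ⟨a, B₁' ++ B₂, hab, forall₂_append_right.2 ⟨B₁', B₂, h₁', h₂, rfl⟩, rfl⟩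

lemma forall₂_append_left {α β} {R : α → β → Prop} :
    ∀ {u v : List α} {P : List β},
      List.Forall₂ R (u ++ v) P ↔ ∃ P₁ P₂, List.Forall₂ R u P₁ ∧ List.Forall₂ R v P₂ ∧ P = P₁ ++ P₂
  | [], v, P => by simp
  | a :: u, v, P => by
    rw [List.cons_append, List.forall₂_cons_left_iff]
    constructor
    · rintro ⟨b, P', hab, hP', rfl⟩
      obtain ⟨P₁, P₂, h₁, h₂, rfl⟩ := forall₂_append_left.1 hP'
      exact ⟨b :: P₁, P₂, List.Forall₂.cons hab h₁, h₂, rfl⟩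
    · rintro ⟨P₁, P₂, h₁, h₂, rfl⟩
      obtain ⟨b, P₁', hab, h₁', rfl⟩ := List.forall₂_cons_left_iff.1 h₁
      exact ⟨b, P₁' ++ P₂, hab, forall₂_append_left.2 ⟨P₁', P₂, h₁', h₂, rfl⟩, rfl⟩

lemma forall₂_append {α β} {R : α → β → Prop} {u v P Q'} (h₁ : List.Forall₂ R u P)
    (h₂ : List.Forall₂ R v Q') : List.Forall₂ R (u ++ v) (P ++ Q') :=
  forall₂_append_left.2 ⟨P, Q', h₁, h₂, rfl⟩

lemma mem_lsubList_iff {x N} : ∀ {B D : List Tm},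
    D ∈ lsubList x N B ↔
      ∃ B₁ L B₂ L', L' ∈ lsub x N L ∧ B = B₁ ++ L :: B₂ ∧ D = B₁ ++ L' :: B₂ := by
  intro B
  induction B with
  | nil =>
    intro D
    simp only [lsubList, Set.mem_empty_iff_false, false_iff]
    rintro ⟨B₁, L, B₂, L', -, h, -⟩
    exact absurd h.symm (by simp)
  | cons K B ih =>
    intro D
    constructor
    · intro h
      simp only [lsubList, Set.mem_union, Set.mem_setOf_eq] at h
      rcases h with ⟨L', hL', rfl⟩ | ⟨P', hP', rfl⟩
      · exact ⟨[], K, B, L', hL', rfl, rfl⟩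
      · obtain ⟨B₁, L, B₂, L', h1, rfl, rfl⟩ := ih.1 hP'
        exact ⟨K :: B₁, L, B₂, L', h1, rfl, rfl⟩
    · rintro ⟨B₁, L, B₂, L', h1, h2, rfl⟩
      simp only [lsubList, Set.mem_union, Set.mem_setOf_eq]
      cases B₁ with
      | nil =>
        simp only [List.nil_append] at h2 ⊢
        injection h2 with e1 e2
        subst e1; subst e2
        exact Or.inl ⟨L', h1, rfl⟩
      | cons K' B₁ =>
        simp only [List.cons_append, List.cons.injEq] at h2
        obtain ⟨rfl, rfl⟩ := h2
        exact Or.inr ⟨B₁ ++ L' :: B₂, ih.2 ⟨B₁, L, B₂, L', h1, rfl, rfl⟩, rfl⟩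

lemma lsubList_perm {x : ℕ} {N' : Tm} {D D₀ B : List Tm} (hp : D.Perm D₀)
    (h : D₀ ∈ lsubList x N' B) : ∃ B', B'.Perm B ∧ D ∈ lsubList x N' B' := by
  obtain ⟨C₁, L, C₂, L', hL', rfl, rfl⟩ := mem_lsubList_iff.1 h
  have hL'D : L' ∈ D := hp.mem_iff.2 (by simp)
  obtain ⟨D₁, D₂, rfl⟩ := List.append_of_mem hL'D
  have h1 : (L' :: (D₁ ++ D₂)).Perm (L' :: (C₁ ++ C₂)) :=
    List.perm_middle.symm.trans (hp.trans List.perm_middle)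
  refine ⟨D₁ ++ L :: D₂, ?_, mem_lsubList_iff.2 ⟨D₁, L, D₂, L', hL', rfl, rfl⟩⟩
  exact List.perm_middle.trans ((h1.cons_inv.cons L).trans List.perm_middle.symm)

def Tbag (P Q : List Tm) : Set (List Tm) :=
  {B | ∃ B' ∈ TList P, ∃ S : List Tm, (∀ L ∈ S, L ∈ TSum Q) ∧ B.Perm (B' ++ S)}

lemma mem_Tbag_iff {P Q B : List Tm} :
    B ∈ Tbag P Q ↔ ∃ B', List.Forall₂ (fun a b => a ∈ T b) B' P ∧
      ∃ S : List Tm, (∀ L ∈ S, L ∈ TSum Q) ∧ B.Perm (B' ++ S) := by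
  simp [Tbag, mem_TList_iff]

lemma Tbag_perm {P Q B B' : List Tm} (h : B.Perm B') (hB' : B' ∈ Tbag P Q) : B ∈ Tbag P Q := by
  obtain ⟨C, hC, S, hS, hp⟩ := hB'
  exact ⟨C, hC, S, hS, h.trans hp⟩

def Stmt1 (x : ℕ) (N A : Tm) : Prop :=
  ∀ C, (∃ B ∈ lsub x N A, C ∈ T B) ↔ ∃ A' ∈ T A, ∃ N' ∈ T N, C ∈ lsub x N' A'

lemma stmtSum {x N} {Q : List Tm} (hQ : ∀ L ∈ Q, Stmt1 x N L) :
    ∀ C, (∃ B ∈ lsubSum x N Q, C ∈ T B) ↔ ∃ A' ∈ TSum Q, ∃ N' ∈ T N, C ∈ lsub x N' A' := by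
  intro C
  constructor
  · rintro ⟨B, hB, hC⟩
    obtain ⟨L, hL, hBL⟩ := mem_lsubSum_iff.1 hB
    obtain ⟨A', hA', N', hN', hC'⟩ := (hQ L hL C).1 ⟨B, hBL, hC⟩
    exact ⟨A', mem_TSum_iff.2 ⟨L, hL, hA'⟩, N', hN', hC'⟩
  · rintro ⟨A', hA', N', hN', hC⟩
    obtain ⟨L, hL, hA'⟩ := mem_TSum_iff.1 hA'
    obtain ⟨B, hB, hC'⟩ := (hQ L hL C).2 ⟨A', hA', N', hN', hC⟩
    exact ⟨B, mem_lsubSum_iff.2 ⟨L, hL, hB⟩, hC'⟩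

lemma stmt2 {x N} {P Q : List Tm} (hP : ∀ L ∈ P, Stmt1 x N L) (hQ : ∀ L ∈ Q, Stmt1 x N L) :
    ∀ D : List Tm,
      ((∃ P' ∈ lsubList x N P, D ∈ Tbag P' Q) ∨ ∃ N₁ ∈ lsubSum x N Q, D ∈ Tbag (P ++ [N₁]) Q)
      ↔ ∃ B ∈ Tbag P Q, ∃ N' ∈ T N, D ∈ lsubList x N' B := by
  intro D
  constructor
  · rintro (⟨P', hP', hD⟩ | ⟨N₁, hN₁, hD⟩)
    · obtain ⟨P₁, L, P₂, L', hL', rfl, rfl⟩ := mem_lsubList_iff.1 hP'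
      obtain ⟨B', hB', S, hS, hDperm⟩ := mem_Tbag_iff.1 hD
      obtain ⟨B₁, B₂', hB₁, hB₂', rfl⟩ := forall₂_append_right.1 hB'
      obtain ⟨M', B₂, hM', hB₂, rfl⟩ := List.forall₂_cons_right_iff.1 hB₂'
      have hLmem : L ∈ P₁ ++ L :: P₂ := by simp
      obtain ⟨L'', hL'', N', hN', hM'sub⟩ :=
        (hP L hLmem M').1 ⟨L', hL', hM'⟩
      have hD₀ : (B₁ ++ M' :: (B₂ ++ S)) ∈ lsubList x N' (B₁ ++ L'' :: (B₂ ++ S)) :=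
        mem_lsubList_iff.2 ⟨B₁, L'', B₂ ++ S, M', hM'sub, rfl, rfl⟩
      have hDperm' : D.Perm (B₁ ++ M' :: (B₂ ++ S)) := by
        simpa using hDperm
      obtain ⟨Bt, hBtp, hDmem⟩ := lsubList_perm hDperm' hD₀
      refine ⟨Bt, Tbag_perm hBtp ?_, N', hN', hDmem⟩
      refine mem_Tbag_iff.2 ⟨B₁ ++ L'' :: B₂, forall₂_append hB₁ (List.Forall₂.cons hL'' hB₂),
        S, hS, ?_⟩
      simp
    · obtain ⟨B', hB', S, hS, hDperm⟩ := mem_Tbag_iff.1 hD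
      obtain ⟨B₁, B₂', hB₁, hB₂', rfl⟩ := forall₂_append_right.1 hB'
      obtain ⟨M', B₂, hM', hB₂, rfl⟩ := List.forall₂_cons_right_iff.1 hB₂'
      obtain rfl : B₂ = [] := List.forall₂_nil_right_iff.1 hB₂
      obtain ⟨A', hA', N', hN', hM'sub⟩ := (stmtSum hQ M').1 ⟨N₁, hN₁, hM'⟩
      have hD₀ : (B₁ ++ M' :: S) ∈ lsubList x N' (B₁ ++ A' :: S) :=
        mem_lsubList_iff.2 ⟨B₁, A', S, M', hM'sub, rfl, rfl⟩
      have hDperm' : D.Perm (B₁ ++ M' :: S) := by simpa using hDperm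
      obtain ⟨Bt, hBtp, hDmem⟩ := lsubList_perm hDperm' hD₀
      refine ⟨Bt, Tbag_perm hBtp ?_, N', hN', hDmem⟩
      refine mem_Tbag_iff.2 ⟨B₁, hB₁, A' :: S, ?_, List.Perm.refl _⟩
      intro M hM
      rcases hM with _ | hM
      · exact hA'
      · exact hS _ (by assumption)
  · rintro ⟨B, hB, N', hN', hD⟩
    obtain ⟨B₁, L, B₂, L', hL', rfl, rfl⟩ := mem_lsubList_iff.1 hD
    obtain ⟨P'', hP'', S, hS, hBperm⟩ := mem_Tbag_iff.1 hB
    have hperm1 : (L :: (B₁ ++ B₂)).Perm (P'' ++ S) := List.perm_middle.symm.trans hBperm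
    have hLmem : L ∈ P'' ++ S := hperm1.subset (by simp)
    rcases List.mem_append.1 hLmem with hLP | hLS
    · obtain ⟨C₁, C₂, rfl⟩ := List.append_of_mem hLP
      obtain ⟨Pa, Pb', hC₁, hPb', rfl⟩ := forall₂_append_left.1 hP''
      obtain ⟨K, Pb, hLK, hC₂, rfl⟩ := List.forall₂_cons_left_iff.1 hPb'
      have hKmem : K ∈ Pa ++ K :: Pb := by simp
      obtain ⟨K', hK'sub, hL'T⟩ := (hP K hKmem L').2 ⟨L, hLK, N', hN', hL'⟩
      refine Or.inl ⟨Pa ++ K' :: Pb, mem_lsubList_iff.2 ⟨Pa, K, Pb, K', hK'sub, rfl, rfl⟩, ?_⟩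
      refine mem_Tbag_iff.2 ⟨C₁ ++ L' :: C₂, forall₂_append hC₁ (List.Forall₂.cons hL'T hC₂),
        S, hS, ?_⟩
      have e1 : (C₁ ++ L :: C₂) ++ S = C₁ ++ L :: (C₂ ++ S) := by simp
      have h2 : (B₁ ++ B₂).Perm (C₁ ++ (C₂ ++ S)) :=
        (hperm1.trans (e1 ▸ List.perm_middle)).cons_inv
      have h3 : (L' :: (C₁ ++ (C₂ ++ S))).Perm ((C₁ ++ L' :: C₂) ++ S) := by
        rw [show (C₁ ++ L' :: C₂) ++ S = C₁ ++ L' :: (C₂ ++ S) by simp]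
        exact List.perm_middle.symm
      exact List.perm_middle.trans ((h2.cons L').trans h3)
    · obtain ⟨S₁, S₂, rfl⟩ := List.append_of_mem hLS
      have hLQ : L ∈ TSum Q := hS L (by simp)
      obtain ⟨N₁, hN₁, hL'T⟩ := (stmtSum hQ L').2 ⟨L, hLQ, N', hN', hL'⟩
      refine Or.inr ⟨N₁, hN₁, ?_⟩
      refine mem_Tbag_iff.2 ⟨P'' ++ [L'],
        forall₂_append hP'' (List.Forall₂.cons hL'T List.Forall₂.nil), S₁ ++ S₂, ?_, ?_⟩
      · intro M hM
        rcases List.mem_append.1 hM with h | h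
        · exact hS _ (by simp [h])
        · exact hS _ (by simp [h])
      · have e1 : P'' ++ (S₁ ++ L :: S₂) = (P'' ++ S₁) ++ L :: S₂ := by simp
        have h2 : (B₁ ++ B₂).Perm ((P'' ++ S₁) ++ S₂) :=
          (hperm1.trans (e1 ▸ List.perm_middle)).cons_inv
        have h3 : (L' :: ((P'' ++ S₁) ++ S₂)).Perm ((P'' ++ [L']) ++ (S₁ ++ S₂)) := by
          rw [show (P'' ++ [L']) ++ (S₁ ++ S₂) = P'' ++ L' :: (S₁ ++ S₂) by simp,
            show (P'' ++ S₁) ++ S₂ = P'' ++ (S₁ ++ S₂) by simp]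
          exact List.perm_middle.symm
        exact List.perm_middle.trans ((h2.cons L').trans h3)

lemma mem_T_app {M : Tm} {P Q : List Tm} {C : Tm} :
    C ∈ T (.app M P Q) ↔ ∃ M' ∈ T M, ∃ D ∈ Tbag P Q, C = Tm.app M' D [] := by
  simp only [T, Set.mem_setOf_eq, Tbag]
  constructor
  · rintro ⟨M', hM', P', hP', R, hR, P'', hperm, rfl⟩
    exact ⟨M', hM', P'', ⟨P', hP', R, hR, hperm⟩, rfl⟩
  · rintro ⟨M', hM', D, ⟨P', hP', S, hS, hperm⟩, rfl⟩
    exact ⟨M', hM', P', hP', S, hS, D, hperm, rfl⟩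

lemma mem_lsub_app {x : ℕ} {N M : Tm} {P Q : List Tm} {C : Tm} :
    C ∈ lsub x N (.app M P Q) ↔
      (∃ M' ∈ lsub x N M, C = Tm.app M' P Q) ∨
      (∃ P' ∈ lsubList x N P, C = Tm.app M P' Q) ∨
      (∃ N₁ ∈ lsubSum x N Q, C = Tm.app M (P ++ [N₁]) Q) := by
  simp [lsub, Set.mem_union, Set.mem_setOf_eq, or_assoc]

lemma lsubSum_nil {x N} : lsubSum x N [] = ∅ := by simp [lsubSum]

lemma stmt1_all (x : ℕ) (N : Tm) : ∀ (n : ℕ) (A : Tm), sizeOf A < n → Stmt1 x N A := by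
  intro n
  induction n with
  | zero => intro A hA; exact absurd hA (Nat.not_lt_zero _)
  | succ n ih =>
    intro A hA
    cases A with
    | var y =>
      intro C
      by_cases h : y = x <;> simp [lsub, T, h]
    | lam y M =>
      have hM : Stmt1 x N M := ih M (by simp at hA; omega)
      intro C
      by_cases h : y = x
      · subst h
        constructor
        · rintro ⟨B, hB, -⟩
          simp [lsub] at hB
        · rintro ⟨A', hA', N', hN', hC⟩
          simp only [T, Set.mem_setOf_eq] at hA'
          obtain ⟨M', -, rfl⟩ := hA'
          simp [lsub] at hC
      · simp only [lsub, T, if_neg h, Set.mem_setOf_eq]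
        constructor
        · rintro ⟨B, ⟨M', hM', rfl⟩, hC⟩
          obtain ⟨M'', hM'', rfl⟩ := hC
          obtain ⟨M₀, hM₀, N', hN', hsub⟩ := (hM M'').1 ⟨M', hM', hM''⟩
          exact ⟨Tm.lam y M₀, ⟨M₀, hM₀, rfl⟩, N', hN',
            by simp only [lsub, if_neg h, Set.mem_setOf_eq]; exact ⟨M'', hsub, rfl⟩⟩
        · rintro ⟨A', ⟨M₀, hM₀, rfl⟩, N', hN', hC⟩
          simp only [lsub, if_neg h, Set.mem_setOf_eq] at hC
          obtain ⟨M₁, hM₁, rfl⟩ := hC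
          obtain ⟨M', hM', hM₁T⟩ := (hM M₁).2 ⟨M₀, hM₀, N', hN', hM₁⟩
          exact ⟨Tm.lam y M', ⟨M', hM', rfl⟩, ⟨M₁, hM₁T, rfl⟩⟩
    | app M P Q =>
      simp only [Tm.app.sizeOf_spec] at hA
      have hM : Stmt1 x N M := ih M (by omega)
      have hP : ∀ L ∈ P, Stmt1 x N L := fun L hL =>
        ih L (by have := List.sizeOf_lt_of_mem hL; omega)
      have hQ : ∀ L ∈ Q, Stmt1 x N L := fun L hL =>
        ih L (by have := List.sizeOf_lt_of_mem hL; omega)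
      intro C
      constructor
      · rintro ⟨B, hB, hC⟩
        rcases mem_lsub_app.1 hB with ⟨M', hM', rfl⟩ | ⟨P', hP', rfl⟩ | ⟨N₁, hN₁, rfl⟩
        · obtain ⟨M'', hM'', D, hD, rfl⟩ := mem_T_app.1 hC
          obtain ⟨M₀, hM₀, N', hN', hsub⟩ := (hM M'').1 ⟨M', hM', hM''⟩
          refine ⟨Tm.app M₀ D [], mem_T_app.2 ⟨M₀, hM₀, D, hD, rfl⟩, N', hN', ?_⟩
          exact mem_lsub_app.2 (Or.inl ⟨M'', hsub, rfl⟩)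
        · obtain ⟨M'', hM'', D, hD, rfl⟩ := mem_T_app.1 hC
          obtain ⟨B₀, hB₀, N', hN', hDsub⟩ := (stmt2 hP hQ D).1 (Or.inl ⟨P', hP', hD⟩)
          refine ⟨Tm.app M'' B₀ [], mem_T_app.2 ⟨M'', hM'', B₀, hB₀, rfl⟩, N', hN', ?_⟩
          exact mem_lsub_app.2 (Or.inr (Or.inl ⟨D, hDsub, rfl⟩))
        · obtain ⟨M'', hM'', D, hD, rfl⟩ := mem_T_app.1 hC
          obtain ⟨B₀, hB₀, N', hN', hDsub⟩ := (stmt2 hP hQ D).1 (Or.inr ⟨N₁, hN₁, hD⟩)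
          refine ⟨Tm.app M'' B₀ [], mem_T_app.2 ⟨M'', hM'', B₀, hB₀, rfl⟩, N', hN', ?_⟩
          exact mem_lsub_app.2 (Or.inr (Or.inl ⟨D, hDsub, rfl⟩))
      · rintro ⟨A', hA', N', hN', hC⟩
        obtain ⟨M₀, hM₀, D, hD, rfl⟩ := mem_T_app.1 hA'
        rcases mem_lsub_app.1 hC with ⟨M₀', hsub, rfl⟩ | ⟨D', hD', rfl⟩ | ⟨N₁, hN₁, -⟩
        · obtain ⟨M', hM'sub, hM₀'T⟩ := (hM M₀').2 ⟨M₀, hM₀, N', hN', hsub⟩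
          exact ⟨Tm.app M' P Q, mem_lsub_app.2 (Or.inl ⟨M', hM'sub, rfl⟩),
            mem_T_app.2 ⟨M₀', hM₀'T, D, hD, rfl⟩⟩
        · rcases (stmt2 hP hQ D').2 ⟨D, hD, N', hN', hD'⟩ with ⟨P', hP'sub, hD'T⟩ | ⟨N₁, hN₁, hD'T⟩
          · exact ⟨Tm.app M P' Q, mem_lsub_app.2 (Or.inr (Or.inl ⟨P', hP'sub, rfl⟩)),
              mem_T_app.2 ⟨M₀, hM₀, D', hD'T, rfl⟩⟩
          · exact ⟨Tm.app M (P ++ [N₁]) Q, mem_lsub_app.2 (Or.inr (Or.inr ⟨N₁, hN₁, rfl⟩)),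
              mem_T_app.2 ⟨M₀, hM₀, D', hD'T, rfl⟩⟩
        · rw [lsubSum_nil] at hN₁; exact absurd hN₁ (Set.notMem_empty _)

/-- The Taylor expansion commutes with linear substitution:
`T(A⟨N/x⟩) = T(A)⟨T(N)/x⟩` for every expression `A` (term or bag) and term `N`,
substitution being extended elementwise to sets. -/
theorem taylor_commutes_with_linear_substitution (x : ℕ) (N : Tm) :
    (∀ A : Tm, (⋃ B ∈ lsub x N A, T B) = ⋃ A' ∈ T A, ⋃ N' ∈ T N, lsub x N' A') ∧
    (∀ P Q : List Tm,   -- a bag `[P, Q^!]` with linear part `P` and promoted sum `Q`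
      (⋃ R ∈ ({R | ∃ P' ∈ lsubList x N P, R = (P', Q)} ∪
              {R | ∃ N' ∈ lsubSum x N Q, R = (P ++ [N'], Q)} :
                Set (List Tm × List Tm)),
        {B : List Tm | ∃ B' ∈ TList R.1, ∃ S : List Tm,
          (∀ L ∈ S, L ∈ TSum R.2) ∧ B.Perm (B' ++ S)}) =
      ⋃ B' ∈ {B : List Tm | ∃ P' ∈ TList P, ∃ S : List Tm,
          (∀ L ∈ S, L ∈ TSum Q) ∧ B.Perm (P' ++ S)},
        ⋃ N' ∈ T N, lsubList x N' B') := by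
  constructor
  · intro A
    have h := stmt1_all x N (sizeOf A + 1) A (Nat.lt_succ_self _)
    ext C
    simp only [Set.mem_iUnion, exists_prop]
    exact h C
  · intro P Q
    have hP : ∀ L ∈ P, Stmt1 x N L := fun L _ => stmt1_all x N (sizeOf L + 1) L (Nat.lt_succ_self _)
    have hQ : ∀ L ∈ Q, Stmt1 x N L := fun L _ => stmt1_all x N (sizeOf L + 1) L (Nat.lt_succ_self _)
    ext D
    simp only [Set.mem_iUnion, Set.mem_union, Set.mem_setOf_eq, exists_prop]
    constructor
    · rintro ⟨R, hR | hR, hD⟩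
      · obtain ⟨P', hP', rfl⟩ := hR
        obtain ⟨B, hB, N', hN', hmem⟩ := (stmt2 hP hQ D).1 (Or.inl ⟨P', hP', hD⟩)
        exact ⟨B, hB, N', hN', hmem⟩
      · obtain ⟨N₁, hN₁, rfl⟩ := hR
        obtain ⟨B, hB, N', hN', hmem⟩ := (stmt2 hP hQ D).1 (Or.inr ⟨N₁, hN₁, hD⟩)
        exact ⟨B, hB, N', hN', hmem⟩
    · rintro ⟨B, hB, N', hN', hmem⟩
      rcases (stmt2 hP hQ D).2 ⟨B, hB, N', hN', hmem⟩ with ⟨P', hP', hD⟩ | ⟨N₁, hN₁, hD⟩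
      · exact ⟨(P', Q), Or.inl ⟨P', hP', rfl⟩, hD⟩
      · exact ⟨(P ++ [N₁], Q), Or.inr ⟨N₁, hN₁, rfl⟩, hD⟩
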